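/- For all real λ, x, y and natural n, the multiplication theorem H_n(λ x, y) = Σ_{r=0}^n ((λ-1) x)^r · C(n,r) · H_{n-r}(x,y) holds, where C(n,r) is the binomial coefficient. -/

import Mathlib

open Real Finset

noncomputable def hermite2 (n : ℕ) (x y : ℝ) : ℝ :=
  (Nat.factorial n : ℝ) *
    ∑ r ∈ Finset.range (n / 2 + 1),
      x ^ (n - 2 * r) * y ^ r / ((Nat.factorial (n - 2 * r) : ℝ) * (Nat.factorial r : ℝ))

theorem hermite2_mult_theorem (lam x y : ℝ) (n : ℕ) :
    hermite2 n (lam * x) y =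
      ∑ r ∈ Finset.range (n + 1),
        ((lam - 1) * x) ^ r * (Nat.choose n r : ℝ) * hermite2 (n - r) x y := by
  have hfac : ∀ m : ℕ, (Nat.factorial m : ℝ) ≠ 0 := fun m =>
    Nat.cast_ne_zero.mpr m.factorial_ne_zero
  set F : ℕ → ℕ → ℝ := fun r s =>
    (Nat.factorial n : ℝ) /
        (Nat.factorial r * Nat.factorial s * Nat.factorial (n - r - 2 * s)) *
      ((lam - 1) * x) ^ r * x ^ (n - r - 2 * s) * y ^ s with hF
  -- Step A: expand the LHS
  have hL : hermite2 n (lam * x) y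
      = ∑ s ∈ range (n / 2 + 1), ∑ r ∈ range (n - 2 * s + 1), F r s := by
    rw [hermite2, mul_sum]
    refine sum_congr rfl fun s hs => ?_
    have hs' : 2 * s ≤ n := by
      have := mem_range.mp hs
      omega
    have hpow : (lam * x) ^ (n - 2 * s)
        = ∑ r ∈ range (n - 2 * s + 1),
            ((lam - 1) * x) ^ r * x ^ (n - 2 * s - r) * ((n - 2 * s).choose r : ℝ) := by
      rw [show lam * x = (lam - 1) * x + x by ring, add_pow]
    rw [hpow, sum_mul, sum_div, mul_sum]
    refine sum_congr rfl fun r hr => ?_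
    have hr' : r ≤ n - 2 * s := by
      have := mem_range.mp hr
      omega
    have he : n - 2 * s - r = n - r - 2 * s := by omega
    rw [Nat.cast_choose ℝ hr', hF]
    simp only [he]
    field_simp
  -- Step B: expand the RHS
  have hR : (∑ r ∈ Finset.range (n + 1),
        ((lam - 1) * x) ^ r * (Nat.choose n r : ℝ) * hermite2 (n - r) x y)
      = ∑ r ∈ range (n + 1), ∑ s ∈ range ((n - r) / 2 + 1), F r s := by
    refine sum_congr rfl fun r hr => ?_
    have hr' : r ≤ n := by
      have := mem_range.mp hr
      omega
    rw [hermite2, ← mul_assoc, mul_sum]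
    refine sum_congr rfl fun s hs => ?_
    rw [Nat.cast_choose ℝ hr', hF]
    field_simp
  -- Step C: swap the order of summation
  have hfilt1 : ∀ s, 2 * s ≤ n →
      (range (n + 1)).filter (fun r => r + 2 * s ≤ n) = range (n - 2 * s + 1) := by
    intro s hs
    ext r
    simp only [mem_filter, mem_range]
    omega
  have hfilt2 : ∀ r, r ≤ n →
      (range (n + 1)).filter (fun s => r + 2 * s ≤ n) = range ((n - r) / 2 + 1) := by
    intro r hr
    ext s
    simp only [mem_filter, mem_range]
    omega
  have step1 : (∑ s ∈ range (n / 2 + 1), ∑ r ∈ range (n - 2 * s + 1), F r s)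
      = ∑ s ∈ range (n + 1), ∑ r ∈ range (n + 1),
          if r + 2 * s ≤ n then F r s else 0 := by
    have h1 : ∀ s ∈ range (n / 2 + 1),
        (∑ r ∈ range (n - 2 * s + 1), F r s)
          = ∑ r ∈ range (n + 1), if r + 2 * s ≤ n then F r s else 0 := by
      intro s hs
      have hs' : 2 * s ≤ n := by
        have := mem_range.mp hs
        omega
      rw [← sum_filter, hfilt1 s hs']
    rw [sum_congr rfl h1]
    refine sum_subset (range_subset_range.mpr (by omega)) fun s hs hns => ?_
    refine sum_eq_zero fun r hr => ?_
    have hsn : ¬ (s < n / 2 + 1) := fun h => hns (mem_range.mpr h)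
    exact if_neg (by omega)
  have step2 : (∑ r ∈ range (n + 1), ∑ s ∈ range ((n - r) / 2 + 1), F r s)
      = ∑ r ∈ range (n + 1), ∑ s ∈ range (n + 1),
          if r + 2 * s ≤ n then F r s else 0 := by
    refine sum_congr rfl fun r hr => ?_
    have hr' : r ≤ n := by
      have := mem_range.mp hr
      omega
    rw [← sum_filter, hfilt2 r hr']
  rw [hL, hR, step1, step2, sum_comm]
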